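/- Let n ≥ 1 and let K be an n×n matrix over the semiring ℝ_min (equivalently, an endomorphism of the free semimodule (ℝ_min)ⁿ). Then K has an eigenvalue and a nontrivial eigenvector: there exist λ ∈ ℝ_min and a vector v ∈ (ℝ_min)ⁿ with v not equal to the zero vector (the vector all of whose entries are 𝟘 = +∞) such that K ⊙ v = λ ⊙ v, i.e. min_k ( K_{ik} + v_k ) = λ + v_i for every i. -/

import Mathlib

open Tropical Finset

local notation "T" => Tropical (WithTop ℝ)

lemma trop_sum_le {α : Type*} {s : Finset α} {f : α → T} {j : α} (hj : j ∈ s) :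
    (∑ i ∈ s, f i) ≤ f j := by
  rw [← untrop_le_iff, Finset.untrop_sum']
  exact Finset.inf_le hj

lemma trop_le_sum {α : Type*} {x : T} {s : Finset α} {f : α → T} (h : ∀ i ∈ s, x ≤ f i) :
    x ≤ ∑ i ∈ s, f i := by
  rw [← untrop_le_iff, Finset.untrop_sum']
  exact Finset.le_inf fun i hi => untrop_le_iff.2 (h i hi)

lemma trop_sum_attain {α : Type*} {s : Finset α} (hs : s.Nonempty) (f : α → T) :
    ∃ j ∈ s, (∑ i ∈ s, f i) = f j := by
  obtain ⟨b, hb, hmin⟩ := Finset.exists_min_image s f hs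
  exact ⟨b, hb, le_antisymm (trop_sum_le hb) (trop_le_sum hmin)⟩

section paths

variable {n : ℕ} (B : Matrix (Fin n) (Fin n) T)

/-- Any path's weight is at least the corresponding matrix power entry. -/
lemma pow_le_path (m : ℕ) (q : ℕ → Fin n) :
    (B ^ m) (q 0) (q m) ≤ ∏ t ∈ Finset.range m, B (q t) (q (t + 1)) := by
  induction m with
  | zero => simp [Matrix.one_apply_eq]
  | succ m ih =>
    rw [pow_succ, Finset.prod_range_succ]
    calc (B ^ m * B) (q 0) (q (m + 1)) ≤ (B ^ m) (q 0) (q m) * B (q m) (q (m + 1)) := by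
          rw [Matrix.mul_apply]; exact trop_sum_le (Finset.mem_univ _)
      _ ≤ _ := mul_le_mul_left ih _

/-- Matrix power entries are attained by some path (for positive length). -/
lemma pow_attain (hn : 1 ≤ n) (m : ℕ) (i j : Fin n) :
    ∃ q : ℕ → Fin n, q 0 = i ∧ q (m + 1) = j ∧
      (B ^ (m + 1)) i j = ∏ t ∈ Finset.range (m + 1), B (q t) (q (t + 1)) := by
  have : Nonempty (Fin n) := ⟨⟨0, hn⟩⟩
  induction m generalizing j with
  | zero =>
    refine ⟨fun t => if t = 0 then i else j, by simp, by simp, ?_⟩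
    simp [pow_one]
  | succ m ih =>
    have h1 : (B ^ (m + 2)) i j = ∑ k, (B ^ (m + 1)) i k * B k j := by
      rw [pow_succ, Matrix.mul_apply]
    obtain ⟨k, -, hk⟩ := trop_sum_attain (Finset.univ_nonempty) (fun k => (B ^ (m + 1)) i k * B k j)
    obtain ⟨q', hq0, hqm, hqw⟩ := ih k
    refine ⟨fun t => if t ≤ m + 1 then q' t else j, by simp [hq0], by simp, ?_⟩
    rw [h1, hk, Finset.prod_range_succ]
    have e1 : ∏ t ∈ Finset.range (m + 1), B (if t ≤ m + 1 then q' t else j)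
        (if t + 1 ≤ m + 1 then q' (t + 1) else j) = ∏ t ∈ Finset.range (m + 1), B (q' t) (q' (t + 1)) := by
      refine Finset.prod_congr rfl fun t ht => ?_
      rw [Finset.mem_range] at ht
      rw [if_pos (by omega), if_pos (by omega)]
    rw [e1, ← hqw]
    congr 1
    show B k j = B (if m + 1 ≤ m + 1 then q' (m + 1) else j) (if m + 1 + 1 ≤ m + 1 then q' (m + 1 + 1) else j)
    rw [if_pos le_rfl, if_neg (by omega), hqm]

lemma crux {n : ℕ} (B : Matrix (Fin n) (Fin n) T) (hn : 1 ≤ n)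
    (H : ∀ m, 1 ≤ m → m ≤ n → ∀ i, (1 : T) ≤ (B ^ m) i i) (i j : Fin n) :
    (∑ m ∈ Finset.Icc 1 n, B ^ m) i j ≤ (B ^ (n + 1)) i j := by
  obtain ⟨q, hq0, hqn, hqw⟩ := pow_attain B hn n i j
  -- pigeonhole on the first n+1 vertices
  obtain ⟨a, ha, b, hb, hab, hqab⟩ :
      ∃ a ∈ Finset.range (n + 1), ∃ b ∈ Finset.range (n + 1), a ≠ b ∧ q a = q b := by
    apply Finset.exists_ne_map_eq_of_card_lt_of_maps_to (t := (Finset.univ : Finset (Fin n)))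
    · simpa using Nat.lt_succ_self n
    · intro x _; exact Finset.mem_univ _
  rw [Finset.mem_range] at ha hb
  -- wlog a < b
  obtain ⟨a, b, h, hb, hqab⟩ : ∃ a b, a < b ∧ b < n + 1 ∧ q a = q b := by
    rcases hab.lt_or_gt with h | h
    exacts [⟨a, b, h, hb, hqab⟩, ⟨b, a, h, ha, hqab.symm⟩]
  clear hab
  have hba1 : 1 ≤ b - a := by omega
  have hban : b - a ≤ n := by omega
  set m' := n + 1 - (b - a) with hm'
  have hm'1 : 1 ≤ m' := by omega
  have hm'n : m' ≤ n := by omega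
  have ham' : a < m' := by omega
  set f : ℕ → T := fun t => B (q t) (q (t + 1)) with hf
  set q'' : ℕ → Fin n := fun u => if u ≤ a then q u else q (u + (b - a)) with hq''
  -- the cycle has weight ≥ 1
  have hcyc : (1 : T) ≤ ∏ t ∈ Finset.Ico a b, f t := by
    have h1 := pow_le_path B (b - a) (fun u => q (a + u))
    simp only [add_zero] at h1
    rw [show a + (b - a) = b by omega, ← hqab] at h1
    refine le_trans (le_trans (H (b - a) hba1 hban (q a)) h1) (le_of_eq ?_)
    rw [Finset.prod_Ico_eq_prod_range]
    refine Finset.prod_congr rfl fun r _ => ?_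
    simp [hf, Nat.add_assoc]
  -- the shortened path
  have hshort : (B ^ m') i j ≤ ∏ u ∈ Finset.range m', B (q'' u) (q'' (u + 1)) := by
    have h2 := pow_le_path B m' q''
    have e0 : q'' 0 = i := by simp [hq'', hq0, Nat.zero_le a]
    have em : q'' m' = j := by
      rw [hq'']; simp only
      rw [if_neg (by omega), show m' + (b - a) = n + 1 by omega, hqn]
    rwa [e0, em] at h2
  have hpre : ∏ u ∈ Finset.Ico 0 a, B (q'' u) (q'' (u + 1)) = ∏ t ∈ Finset.Ico 0 a, f t := by
    refine Finset.prod_congr rfl fun u hu => ?_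
    rw [Finset.mem_Ico] at hu
    rw [hq'', hf]; simp only
    rw [if_pos (by omega), if_pos (by omega)]
  have hsuf : ∏ u ∈ Finset.Ico a m', B (q'' u) (q'' (u + 1)) = ∏ t ∈ Finset.Ico b (n + 1), f t := by
    rw [Finset.prod_Ico_eq_prod_range, Finset.prod_Ico_eq_prod_range,
      show m' - a = n + 1 - b by omega]
    refine Finset.prod_congr rfl fun r _ => ?_
    have e1 : q'' (a + r) = q (b + r) := by
      rcases Nat.eq_zero_or_pos r with hr | hr
      · subst hr; simp [hq'', hqab]
      · rw [hq'']; simp only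
        rw [if_neg (by omega), show a + r + (b - a) = b + r by omega]
    have e2 : q'' (a + r + 1) = q (b + r + 1) := by
      rw [hq'']; simp only
      rw [if_neg (by omega), show a + r + 1 + (b - a) = b + r + 1 by omega]
    rw [hf]; simp only
    rw [e1, e2]
  -- assemble
  have hW'' : ∏ u ∈ Finset.range m', B (q'' u) (q'' (u + 1))
      = (∏ t ∈ Finset.Ico 0 a, f t) * ∏ t ∈ Finset.Ico b (n + 1), f t := by
    rw [Finset.range_eq_Ico, ← Finset.prod_Ico_consecutive _ (Nat.zero_le a) ham'.le, hpre, hsuf]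
  have hW : (B ^ (n + 1)) i j
      = ((∏ t ∈ Finset.Ico 0 a, f t) * ∏ t ∈ Finset.Ico a b, f t) * ∏ t ∈ Finset.Ico b (n + 1), f t := by
    rw [hqw, Finset.range_eq_Ico, ← Finset.prod_Ico_consecutive _ (Nat.zero_le b) (by omega : b ≤ n + 1),
      ← Finset.prod_Ico_consecutive _ (Nat.zero_le a) h.le]
  calc (∑ m ∈ Finset.Icc 1 n, B ^ m) i j
      ≤ (B ^ m') i j := by
        rw [Matrix.sum_apply]
        exact trop_sum_le (by rw [Finset.mem_Icc]; exact ⟨hm'1, hm'n⟩)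
    _ ≤ (∏ t ∈ Finset.Ico 0 a, f t) * ∏ t ∈ Finset.Ico b (n + 1), f t := by rw [← hW'']; exact hshort
    _ ≤ ((∏ t ∈ Finset.Ico 0 a, f t) * ∏ t ∈ Finset.Ico a b, f t) * ∏ t ∈ Finset.Ico b (n + 1), f t := by
        rw [mul_assoc]
        refine mul_le_mul_right ?_ _
        calc ∏ t ∈ Finset.Ico b (n + 1), f t = 1 * ∏ t ∈ Finset.Ico b (n + 1), f t := (one_mul _).symm
          _ ≤ _ := mul_le_mul_left hcyc _
    _ = (B ^ (n + 1)) i j := hW.symm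


theorem tropical_eigenvalue_exists {n : ℕ} (hn : 1 ≤ n)
    (K : Matrix (Fin n) (Fin n) (Tropical (WithTop ℝ))) :
    ∃ (l : Tropical (WithTop ℝ)) (v : Fin n → Tropical (WithTop ℝ)),
      v ≠ 0 ∧ ∀ i, K.mulVec v i = l * v i := by
  classical
  by_cases hA : ∃ j, ∀ i, K i j = 0
  · -- a zero column: eigenvalue 𝟘 with a delta eigenvector
    obtain ⟨j, hj⟩ := hA
    refine ⟨0, fun k => if k = j then 1 else 0, ?_, ?_⟩
    · intro hcon
      have := congrFun hcon j
      simp at this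
    · intro i
      rw [zero_mul]
      show ∑ k, K i k * _ = 0
      apply Finset.sum_eq_zero
      intro k _
      by_cases hk : k = j
      · subst hk; simp [hj i]
      · simp [hk]
  · push_neg at hA
    -- every column has a finite entry, hence there is a cycle of finite weight
    choose f hf using hA
    have hiter : ∀ t (x : Fin n), (K ^ t) (f^[t] x) x ≠ 0 := by
      intro t
      induction t with
      | zero => intro x; simp [Matrix.one_apply_eq]
      | succ t ih =>
        intro x hcon
        rw [Function.iterate_succ_apply', pow_succ'] at hcon
        have hle : (K * K ^ t) (f (f^[t] x)) x
            ≤ K (f (f^[t] x)) (f^[t] x) * (K ^ t) (f^[t] x) x := by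
          rw [Matrix.mul_apply]; exact trop_sum_le (Finset.mem_univ _)
        rw [hcon] at hle
        have heq : K (f (f^[t] x)) (f^[t] x) * (K ^ t) (f^[t] x) x = 0 :=
          le_antisymm (Tropical.le_zero _) hle
        have h2 := congrArg untrop heq
        rw [untrop_mul, untrop_zero, WithTop.add_eq_top] at h2
        rcases h2 with h | h
        · exact hf (f^[t] x) (untrop_injective (by rw [h, untrop_zero]))
        · exact ih x (untrop_injective (by rw [h, untrop_zero]))
    have hcycle : ∃ m, 1 ≤ m ∧ m ≤ n ∧ ∃ i, (K ^ m) i i ≠ 0 := by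
      have x0 : Fin n := ⟨0, hn⟩
      obtain ⟨a, ha, b, hb, hab, hqab⟩ :
          ∃ a ∈ Finset.range (n + 1), ∃ b ∈ Finset.range (n + 1),
            a ≠ b ∧ f^[a] x0 = f^[b] x0 := by
        apply Finset.exists_ne_map_eq_of_card_lt_of_maps_to
          (t := (Finset.univ : Finset (Fin n)))
        · simpa using Nat.lt_succ_self n
        · intro x _; exact Finset.mem_univ _
      rw [Finset.mem_range] at ha hb
      obtain ⟨a, b, h, hb, hqab⟩ : ∃ a b, a < b ∧ b < n + 1 ∧ f^[a] x0 = f^[b] x0 := by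
        rcases hab.lt_or_gt with h | h
        exacts [⟨a, b, h, hb, hqab⟩, ⟨b, a, h, ha, hqab.symm⟩]
      refine ⟨b - a, by omega, by omega, f^[a] x0, ?_⟩
      have h3 := hiter (b - a) (f^[a] x0)
      rwa [← Function.iterate_add_apply, show b - a + a = b by omega, ← hqab] at h3
    -- the minimal cycle mean
    set S : Finset (ℕ × Fin n) :=
      (Finset.Icc 1 n ×ˢ Finset.univ).filter (fun p => (K ^ p.1) p.2 p.2 ≠ 0) with hS
    have hmemS : ∀ m (i : Fin n), 1 ≤ m → m ≤ n → (K ^ m) i i ≠ 0 → (m, i) ∈ S := by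
      intro m i h1 h2 h3
      rw [hS, Finset.mem_filter, Finset.mem_product, Finset.mem_Icc]
      exact ⟨⟨⟨h1, h2⟩, Finset.mem_univ _⟩, h3⟩
    have hSne : S.Nonempty := by
      obtain ⟨m, h1, h2, i, h3⟩ := hcycle
      exact ⟨(m, i), hmemS m i h1 h2 h3⟩
    set cand : ℕ × Fin n → ℝ :=
      fun p => (WithTop.untopD 0 (untrop ((K ^ p.1) p.2 p.2))) / p.1 with hcand
    set lam : ℝ := (S.image cand).min' (hSne.image cand) with hlam
    have hfin : ∀ m (i : Fin n), (K ^ m) i i ≠ 0 →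
        ∃ x : ℝ, untrop ((K ^ m) i i) = (x : WithTop ℝ) := by
      intro m i h3
      have h2 : untrop ((K ^ m) i i) ≠ ⊤ :=
        fun hh => h3 (untrop_injective (by rw [hh, untrop_zero]))
      exact WithTop.ne_top_iff_exists.mp h2 |>.imp fun r hr => hr.symm
    have hP2 : ∀ m, 1 ≤ m → m ≤ n → ∀ i : Fin n,
        ((m * lam : ℝ) : WithTop ℝ) ≤ untrop ((K ^ m) i i) := by
      intro m h1 h2 i
      by_cases h3 : (K ^ m) i i = 0
      · rw [h3, untrop_zero]; exact le_top
      · obtain ⟨x, hx⟩ := hfin m i h3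
        have hle : lam ≤ cand (m, i) :=
          Finset.min'_le _ _ (Finset.mem_image_of_mem cand (hmemS m i h1 h2 h3))
        rw [hcand] at hle
        simp only [hx, WithTop.untopD_coe] at hle
        rw [hx, WithTop.coe_le_coe]
        have hm0 : (0 : ℝ) < (m : ℝ) := by positivity
        rw [le_div_iff₀ hm0] at hle
        nlinarith [hle]
    have hP1 : ∃ c, 1 ≤ c ∧ c ≤ n ∧ ∃ i0 : Fin n,
        untrop ((K ^ c) i0 i0) = ((c * lam : ℝ) : WithTop ℝ) := by
      have hmem := Finset.min'_mem (S.image cand) (hSne.image cand)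
      rw [← hlam, Finset.mem_image] at hmem
      obtain ⟨⟨c, i0⟩, hcS, hceq⟩ := hmem
      rw [hS, Finset.mem_filter, Finset.mem_product, Finset.mem_Icc] at hcS
      obtain ⟨⟨⟨h1, h2⟩, -⟩, h3⟩ := hcS
      obtain ⟨x, hx⟩ := hfin c i0 h3
      refine ⟨c, h1, h2, i0, ?_⟩
      rw [hcand] at hceq
      simp only [hx, WithTop.untopD_coe] at hceq
      rw [hx, WithTop.coe_inj]
      have hm0 : (0 : ℝ) < (c : ℝ) := by positivity
      field_simp at hceq
      linarith [hceq]
    obtain ⟨c, hc1, hcn, i0, hcrit0⟩ := hP1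
    -- the normalized matrix
    set B : Matrix (Fin n) (Fin n) (Tropical (WithTop ℝ)) :=
      trop ((-lam : ℝ) : WithTop ℝ) • K with hB
    have hBpow : ∀ (m : ℕ) (i j : Fin n),
        (B ^ m) i j = trop ((-((m : ℝ) * lam) : ℝ) : WithTop ℝ) * (K ^ m) i j := by
      intro m i j
      rw [hB, smul_pow, Matrix.smul_apply, smul_eq_mul]
      congr 1
      apply untrop_injective
      rw [untrop_pow, untrop_trop, untrop_trop, ← WithTop.coe_nsmul]
      congr 1
      push_cast
      ring
    have H : ∀ m, 1 ≤ m → m ≤ n → ∀ i : Fin n, (1 : Tropical (WithTop ℝ)) ≤ (B ^ m) i i := by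
      intro m h1 h2 i
      rw [← untrop_le_iff, untrop_one, hBpow, untrop_mul, untrop_trop]
      calc (0 : WithTop ℝ) = ((-(m * lam) : ℝ) : WithTop ℝ) + ((m * lam : ℝ) : WithTop ℝ) := by
            rw [← WithTop.coe_add]; norm_num
        _ ≤ _ := add_le_add_right (hP2 m h1 h2 i) _
    have hcrit : (B ^ c) i0 i0 = 1 := by
      apply untrop_injective
      rw [hBpow, untrop_mul, untrop_trop, hcrit0, untrop_one, ← WithTop.coe_add]
      norm_num
    -- the eigenvector
    set v : Fin n → Tropical (WithTop ℝ) :=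
      fun j => (∑ m ∈ Finset.Icc 1 n, B ^ m) j i0 with hv
    have hv_eq : ∀ j, v j = ∑ m ∈ Finset.Icc 1 n, (B ^ m) j i0 := by
      intro j; rw [hv]; simp only [Matrix.sum_apply]
    have hv0 : v i0 = 1 := by
      apply le_antisymm
      · rw [hv_eq]
        have := trop_sum_le (f := fun m => (B ^ m) i0 i0)
          (Finset.mem_Icc.2 ⟨hc1, hcn⟩)
        exact le_trans this hcrit.le
      · rw [hv_eq]
        exact trop_le_sum fun m hm => by
          rw [Finset.mem_Icc] at hm
          exact H m hm.1 hm.2 i0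
    have hmul : ∀ j, B.mulVec v j = ∑ m ∈ Finset.Icc 1 n, (B ^ (m + 1)) j i0 := by
      intro j
      show ∑ k, B j k * v k = _
      calc ∑ k, B j k * v k
          = ∑ k, ∑ m ∈ Finset.Icc 1 n, B j k * (B ^ m) k i0 := by
            refine Finset.sum_congr rfl fun k _ => ?_
            rw [hv_eq k, Finset.mul_sum]
        _ = ∑ m ∈ Finset.Icc 1 n, ∑ k, B j k * (B ^ m) k i0 := Finset.sum_comm
        _ = ∑ m ∈ Finset.Icc 1 n, (B ^ (m + 1)) j i0 := by
            refine Finset.sum_congr rfl fun m _ => ?_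
            rw [pow_succ', Matrix.mul_apply]
    have hfix : ∀ j, B.mulVec v j = v j := by
      intro j
      apply le_antisymm
      · rw [hv_eq]
        apply trop_le_sum
        intro m hm
        rw [Finset.mem_Icc] at hm
        rcases eq_or_lt_of_le hm.1 with h1 | h1
        · rw [← h1, pow_one]
          have hle : B.mulVec v j ≤ B j i0 * v i0 := trop_sum_le (Finset.mem_univ i0)
          rwa [hv0, mul_one] at hle
        · rw [hmul]
          have hmem : m - 1 ∈ Finset.Icc 1 n := Finset.mem_Icc.2 ⟨by omega, by omega⟩
          have hle : (∑ m ∈ Finset.Icc 1 n, (B ^ (m + 1)) j i0) ≤ (B ^ (m - 1 + 1)) j i0 :=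
            trop_sum_le (f := fun m => (B ^ (m + 1)) j i0) hmem
          rwa [show m - 1 + 1 = m by omega] at hle
      · rw [hmul]
        apply trop_le_sum
        intro m hm
        rw [Finset.mem_Icc] at hm
        rcases lt_or_eq_of_le hm.2 with h1 | h1
        · rw [hv_eq]
          exact trop_sum_le (Finset.mem_Icc.2 ⟨by omega, by omega⟩)
        · rw [h1]
          exact crux B hn H j i0
    have hsm : trop ((lam : ℝ) : WithTop ℝ) • B = K := by
      rw [hB, smul_smul, ← trop_add, ← WithTop.coe_add]
      norm_num
    refine ⟨trop ((lam : ℝ) : WithTop ℝ), v, ?_, ?_⟩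
    · intro hcon
      have h1 := congrFun hcon i0
      rw [hv0] at h1
      simp at h1
    · intro i
      calc K.mulVec v i = (trop ((lam : ℝ) : WithTop ℝ) • B).mulVec v i := by rw [hsm]
        _ = trop ((lam : ℝ) : WithTop ℝ) * B.mulVec v i := by
            rw [Matrix.smul_mulVec]; rfl
        _ = trop ((lam : ℝ) : WithTop ℝ) * v i := by rw [hfix]
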